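/- Let ρ : ℍ → M₂(ℂ) be the embedding ρ(a + b·i + c·j + d·k) = [[a + b·i, c + d·i], [−c + d·i, a − b·i]], and regard the space of complex row vectors ℂ² as a right ℍ-module via v ↦ v·ρ(q). Then the ℝ-bilinear map sending (v, c) with v = (a, b) ∈ ℂ² and c ∈ ℂ to the matrix [[a·c, b·c], [−b̄·c, ā·c]] induces a bijective ℂ-linear map φ : ℂ² ⊗_ℝ ℂ → M₂(ℂ) (ℂ acting on the right tensor factor) which satisfies φ((v·ρ(q)) ⊗ c) = φ(v ⊗ c)·ρ(q) for all q ∈ ℍ, v ∈ ℂ², c ∈ ℂ, and φ((d·v) ⊗ c) = [[d, 0], [0, d̄]]·φ(v ⊗ c) for all d ∈ ℂ. -/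
import Mathlib


open Quaternion Matrix TensorProduct

/-- The matrix `ρ(a + b i + c j + d k) = [[a + b i, c + d i],[−c + d i, a − b i]]`
representing a quaternion, via which `ℂ²` (row vectors) is a right `ℍ`-module. -/
def quatMat (q : ℍ[ℝ]) : Matrix (Fin 2) (Fin 2) ℂ :=
  !![(⟨q.re, q.imI⟩ : ℂ), (⟨q.imJ, q.imK⟩ : ℂ);
     (⟨-q.imJ, q.imK⟩ : ℂ), (⟨q.re, -q.imI⟩ : ℂ)]

noncomputable def gmap : (Fin 2 → ℂ) →ₗ[ℝ] Matrix (Fin 2) (Fin 2) ℂ where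
  toFun v := !![v 0, v 1; -(star (v 1)), star (v 0)]
  map_add' v w := by
    ext i j
    fin_cases i <;> fin_cases j <;> simp [star_add] <;> ring
  map_smul' r v := by
    ext i j
    fin_cases i <;> fin_cases j <;> simp [Complex.real_smul] <;> ring

noncomputable def phi : (ℂ ⊗[ℝ] (Fin 2 → ℂ)) →ₗ[ℂ] Matrix (Fin 2) (Fin 2) ℂ :=
  TensorProduct.AlgebraTensorModule.lift (LinearMap.toSpanSingleton ℂ _ gmap)

theorem phi_tmul (c : ℂ) (v : Fin 2 → ℂ) :
    phi (c ⊗ₜ v) = !![v 0 * c, v 1 * c; -(star (v 1)) * c, star (v 0) * c] := by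
  ext i j
  fin_cases i <;> fin_cases j <;>
    simp [phi, gmap, LinearMap.toSpanSingleton, Matrix.smul_apply, mul_comm]

theorem gmap_vecMul (q : ℍ[ℝ]) (v : Fin 2 → ℂ) :
    gmap (Matrix.vecMul v (quatMat q)) = gmap v * quatMat q := by
  ext i j
  fin_cases i <;> fin_cases j <;>
    simp [gmap, quatMat, Matrix.vecMul, Matrix.mul_apply, Fin.sum_univ_two,
      dotProduct, Matrix.vecHead, Matrix.vecTail] <;>
    apply Complex.ext <;> simp [Complex.ext_iff] <;> ring

theorem gmap_smul (d : ℂ) (v : Fin 2 → ℂ) :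
    gmap (d • v) = !![d, 0; 0, star d] * gmap v := by
  ext i j
  fin_cases i <;> fin_cases j <;>
    simp [gmap, Matrix.mul_apply, Fin.sum_univ_two] <;> ring

theorem phi_surj : Function.Surjective phi := by
  intro M
  refine ⟨((M 0 0 + M 1 1)/2) ⊗ₜ ![1,0] + ((M 1 1 - M 0 0)*Complex.I/2) ⊗ₜ ![Complex.I,0]
    + ((M 0 1 - M 1 0)/2) ⊗ₜ ![0,1] + (-(M 0 1 + M 1 0)*Complex.I/2) ⊗ₜ ![0,Complex.I], ?_⟩
  rw [map_add, map_add, map_add, phi_tmul, phi_tmul, phi_tmul, phi_tmul]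
  ext i j
  fin_cases i <;> fin_cases j <;>
    simp [Complex.ext_iff] <;> norm_num <;> ring_nf <;> simp

theorem phi_bij : Function.Bijective phi := by
  have h : Module.finrank ℂ (ℂ ⊗[ℝ] (Fin 2 → ℂ)) = Module.finrank ℂ (Matrix (Fin 2) (Fin 2) ℂ) := by
    rw [Module.finrank_baseChange]
    simp [Module.finrank_matrix, Module.finrank_pi_fintype]
  exact ⟨(LinearMap.injective_iff_surjective_of_finrank_eq_finrank h).mpr phi_surj, phi_surj⟩

theorem phi_eq (c : ℂ) (v : Fin 2 → ℂ) : phi (c ⊗ₜ v) = c • gmap v := rfl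

/-- The `ℝ`-bilinear map sending `(v, c)` with `v = (a, b) ∈ ℂ²` (row vector) and
`c ∈ ℂ` to `[[a·c, b·c],[−b̄·c, ā·c]]` induces a bijective `ℂ`-linear map
`φ : ℂ² ⊗_ℝ ℂ → M₂(ℂ)` (with `ℂ` acting on the tensor factor carrying `c`, written on
the left in Mathlib) satisfying `φ((v·ρ(q)) ⊗ c) = φ(v ⊗ c)·ρ(q)` and
`φ((d·v) ⊗ c) = [[d, 0],[0, d̄]]·φ(v ⊗ c)`. -/
theorem rowVectors_complexification :
    ∃ φ : (ℂ ⊗[ℝ] (Fin 2 → ℂ)) →ₗ[ℂ] Matrix (Fin 2) (Fin 2) ℂ,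
      (∀ (c : ℂ) (v : Fin 2 → ℂ),
        φ (c ⊗ₜ v) = !![v 0 * c, v 1 * c; -(star (v 1)) * c, star (v 0) * c]) ∧
      Function.Bijective φ ∧
      (∀ (q : ℍ[ℝ]) (c : ℂ) (v : Fin 2 → ℂ),
        φ (c ⊗ₜ Matrix.vecMul v (quatMat q)) = φ (c ⊗ₜ v) * quatMat q) ∧
      (∀ (d c : ℂ) (v : Fin 2 → ℂ),
        φ (c ⊗ₜ (d • v)) = !![d, 0; 0, star d] * φ (c ⊗ₜ v)) := by
  refine ⟨phi, phi_tmul, phi_bij, ?_, ?_⟩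
  · intro q c v
    rw [phi_eq, phi_eq, gmap_vecMul, Matrix.smul_mul]
  · intro d c v
    rw [phi_eq, phi_eq, gmap_smul, Matrix.mul_smul]
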